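/- Let Σ be a finite nonempty alphabet and let P be a stochastic language over Σ that admits a reduced representation by a multiplicity automaton. Then there exist a constant C > 0 and ρ ∈ [0,1) such that for every integer k ≥ 0, P(Σ^{≥k}) ≤ C·ρ^k, where Σ^{≥k} = {w ∈ Σ* : |w| ≥ k}. -/

import Mathlib

open scoped BigOperators Matrix

/-- A stochastic language over the alphabet `A`: a nonnegative real-valued function on
words whose values are summable with sum `1`. -/
def IsStochastic {A : Type*} (p : List A → ℝ) : Prop :=
  (∀ w, 0 ≤ p w) ∧ HasSum p 1

/-- The matrix associated to a word: the product of the letter matrices. -/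
def wordMat {A Q : Type*} [Fintype Q] [DecidableEq Q] (T : A → Matrix Q Q ℝ)
    (w : List A) : Matrix Q Q ℝ :=
  (w.map T).prod

/-- The series computed by the multiplicity automaton `(ι, T, τ)`. -/
def maSeries {A Q : Type*} [Fintype Q] [DecidableEq Q] (ι τ : Q → ℝ)
    (T : A → Matrix Q Q ℝ) (w : List A) : ℝ :=
  ι ⬝ᵥ (wordMat T w).mulVec τ

/-- The series of state `q` of the multiplicity automaton. -/
def stateSeries {A Q : Type*} [Fintype Q] [DecidableEq Q] (τ : Q → ℝ)
    (T : A → Matrix Q Q ℝ) (q : Q) (w : List A) : ℝ :=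
  (wordMat T w).mulVec τ q

/-- `(ι, T, τ)` is a reduced representation of the stochastic language `P`. -/
def IsReducedRep {A Q : Type*} [Fintype Q] [DecidableEq Q] (ι τ : Q → ℝ)
    (T : A → Matrix Q Q ℝ) (P : List A → ℝ) : Prop :=
  maSeries ι τ T = P ∧ (∀ q, IsStochastic (stateSeries τ T q)) ∧
    LinearIndependent ℝ (stateSeries τ T)

open Filter Topology

section Aux

variable {A Q : Type*} [Fintype A] [Fintype Q] [DecidableEq Q]

/-- Tail sums of the series of state `q`. -/
noncomputable def tailSum (τ : Q → ℝ) (T : A → Matrix Q Q ℝ) (q : Q) (k : ℕ) : ℝ :=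
  ∑' w : {w : List A // k ≤ w.length}, stateSeries τ T q ↑w

lemma tsum_subtype_congr {α : Type*} (f : α → ℝ) {p q : α → Prop} (h : ∀ a, p a ↔ q a) :
    ∑' a : {x // p x}, f ↑a = ∑' a : {x // q x}, f ↑a := by
  rw [← (Equiv.subtypeEquivRight h).tsum_eq (fun a : {x // q x} => f ↑a)]
  refine tsum_congr fun a => ?_
  obtain ⟨w, hw⟩ := a
  simp [Equiv.subtypeEquivRight]
  rfl

lemma stateSeries_cons (τ : Q → ℝ) (T : A → Matrix Q Q ℝ) (q : Q) (x : A) (w : List A) :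
    stateSeries τ T q (x :: w) = ∑ q' : Q, T x q q' * stateSeries τ T q' w := by
  simp only [stateSeries, wordMat, List.map_cons, List.prod_cons, Matrix.mulVec,
    dotProduct, Matrix.mul_apply, Finset.sum_mul, mul_assoc]
  rw [Finset.sum_comm]
  simp [Finset.mul_sum]

/-- Prepending a letter: words of length at least `k+1` are a letter followed by a word of
length at least `k`. -/
def consEquiv (k : ℕ) : (A × {w : List A // k ≤ w.length}) ≃ {w : List A // k + 1 ≤ w.length} where
  toFun p := ⟨p.1 :: p.2.1, by simpa using p.2.2⟩
  invFun w :=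
    match w with
    | ⟨[], h⟩ => absurd h (by simp)
    | ⟨x :: t, h⟩ => (x, ⟨t, by simpa using h⟩)
  left_inv p := by rcases p with ⟨x, t, h⟩; rfl
  right_inv w := by
    rcases w with ⟨l, h⟩
    cases l with
    | nil => exact absurd h (by simp)
    | cons x t => rfl

lemma tailSum_zero (τ : Q → ℝ) (T : A → Matrix Q Q ℝ)
    (hq : HasSum (stateSeries τ T q) 1) : tailSum τ T q 0 = 1 := by
  have h1 : tailSum τ T q 0 = ∑' w : List A, stateSeries τ T q w := by
    rw [tailSum, ← (Equiv.subtypeUnivEquiv fun w : List A => Nat.zero_le w.length).tsum_eq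
      (stateSeries τ T q)]
    exact tsum_congr fun a => rfl
  rw [h1, hq.tsum_eq]

lemma tailSum_succ (τ : Q → ℝ) (T : A → Matrix Q Q ℝ)
    (hq : ∀ q : Q, Summable (stateSeries τ T q)) (q : Q) (k : ℕ) :
    tailSum τ T q (k + 1) = ∑ x : A, ∑ q' : Q, T x q q' * tailSum τ T q' k := by
  classical
  have hcons : ∀ (x : A) (w : {w : List A // k ≤ w.length}),
      stateSeries τ T q (x :: ↑w) = ∑ q' : Q, T x q q' * stateSeries τ T q' ↑w :=
    fun x w => stateSeries_cons τ T q x ↑w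
  have hinner : ∀ x : A,
      Summable (fun w : {w : List A // k ≤ w.length} => stateSeries τ T q (x :: ↑w)) := by
    intro x
    have : (fun w : {w : List A // k ≤ w.length} => stateSeries τ T q (x :: ↑w)) =
        fun w : {w : List A // k ≤ w.length} => ∑ q' : Q, T x q q' * stateSeries τ T q' ↑w :=
      funext fun w => hcons x w
    rw [this]
    exact summable_sum fun q' _ => ((hq q').subtype _).mul_left _
  have hsub : Summable (fun w : {w : List A // k + 1 ≤ w.length} => stateSeries τ T q ↑w) :=
    (hq q).subtype _
  have hprod : Summable (fun p : A × {w : List A // k ≤ w.length} =>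
      stateSeries τ T q ↑(consEquiv k p)) :=
    ((consEquiv k).summable_iff
      (f := fun w : {w : List A // k + 1 ≤ w.length} => stateSeries τ T q ↑w)).mpr hsub
  have h1 : tailSum τ T q (k + 1) =
      ∑' p : A × {w : List A // k ≤ w.length}, stateSeries τ T q ↑(consEquiv k p) :=
    ((consEquiv k).tsum_eq
      (f := fun w : {w : List A // k + 1 ≤ w.length} => stateSeries τ T q ↑w)).symm
  rw [h1]
  have h2 : ∑' p : A × {w : List A // k ≤ w.length}, stateSeries τ T q ↑(consEquiv k p) =
      ∑' x : A, ∑' w : {w : List A // k ≤ w.length}, stateSeries τ T q (x :: ↑w) :=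
    Summable.tsum_prod' hprod fun x => hinner x
  rw [h2, tsum_fintype]
  refine Finset.sum_congr rfl fun x _ => ?_
  calc ∑' w : {w : List A // k ≤ w.length}, stateSeries τ T q (x :: ↑w)
      = ∑' w : {w : List A // k ≤ w.length}, ∑ q' : Q, T x q q' * stateSeries τ T q' ↑w :=
        tsum_congr fun w => hcons x w
    _ = ∑ q' : Q, ∑' w : {w : List A // k ≤ w.length}, T x q q' * stateSeries τ T q' ↑w :=
        Summable.tsum_finsetSum fun q' _ => ((hq q').subtype _).mul_left _
    _ = ∑ q' : Q, T x q q' * tailSum τ T q' k := by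
        refine Finset.sum_congr rfl fun q' _ => ?_
        rw [tsum_mul_left]
        rfl

lemma tailSum_tendsto (τ : Q → ℝ) (T : A → Matrix Q Q ℝ) (q : Q)
    (hq : HasSum (stateSeries τ T q) 1) :
    Tendsto (tailSum τ T q) atTop (𝓝 0) := by
  classical
  have h0 := tendsto_tsum_compl_atTop_zero (stateSeries τ T q)
  have hF : Tendsto (fun k : ℕ => (List.finite_length_lt A k).toFinset) atTop atTop := by
    refine Filter.tendsto_atTop_atTop.2 fun s => ?_
    refine ⟨(s.sup fun w => w.length) + 1, fun k hk => ?_⟩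
    intro w hw
    simp only [Set.Finite.mem_toFinset, Set.mem_setOf_eq]
    have : w.length ≤ s.sup fun w => w.length := Finset.le_sup hw
    omega
  have hcomp := h0.comp hF
  have heq : ∀ k : ℕ,
      (∑' a : {x : List A // x ∉ (List.finite_length_lt A k).toFinset}, stateSeries τ T q ↑a)
        = tailSum τ T q k := by
    intro k
    refine tsum_subtype_congr (stateSeries τ T q) fun w => ?_
    simp only [Set.Finite.mem_toFinset, Set.mem_setOf_eq, not_lt]
  refine hcomp.congr fun k => heq k

end Aux

set_option maxHeartbeats 1000000 in
/-- Key finite-dimensional lemma: if a sequence of vectors satisfies a linear recurrence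
`v (k+1) = L (v k)` and tends to `0`, then any linear functional of it decays geometrically. -/
lemma geom_decay {n : ℕ} (L : (Fin n → ℝ) →ₗ[ℝ] (Fin n → ℝ)) (φ : (Fin n → ℝ) →ₗ[ℝ] ℝ)
    (v : ℕ → Fin n → ℝ) (hrec : ∀ k, v (k + 1) = L (v k))
    (hlim : Tendsto v atTop (𝓝 0)) :
    ∃ C > (0 : ℝ), ∃ ρ ∈ Set.Ico (0 : ℝ) 1, ∀ k : ℕ, |φ (v k)| ≤ C * ρ ^ k := by
  classical
  set V : Submodule ℝ (Fin n → ℝ) := Submodule.span ℝ (Set.range v) with hV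
  have hmem : ∀ k, v k ∈ V := fun k => Submodule.subset_span ⟨k, rfl⟩
  have hLV : ∀ x ∈ V, L x ∈ V := by
    intro x hx
    induction hx using Submodule.span_induction with
    | mem x hx => rcases hx with ⟨k, rfl⟩; rw [← hrec k]; exact hmem (k + 1)
    | zero => simpa using V.zero_mem
    | add x y hx hy ihx ihy => rw [map_add]; exact V.add_mem ihx ihy
    | smul a x hx ihx => rw [map_smul]; exact V.smul_mem a ihx
  set L' : V →ₗ[ℝ] V := L.restrict hLV with hL'
  set u : ℕ → V := fun k => ⟨v k, hmem k⟩ with hu_def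
  have hL'u : ∀ k, L' (u k) = u (k + 1) := by
    intro k
    apply Subtype.ext
    simp [hL', hu_def, LinearMap.restrict_apply, hrec k]
  have hpow : ∀ m k, (L' ^ m) (u k) = u (k + m) := by
    intro m
    induction m with
    | zero => intro k; simp
    | succ m ih =>
      intro k
      have : (L' ^ (m + 1)) (u k) = (L' ^ m) (L' (u k)) := by
        rw [pow_succ, Module.End.mul_apply]
      rw [this, hL'u k, ih (k + 1)]
      ring_nf
  have hu0 : Tendsto u atTop (𝓝 0) := by
    rw [Topology.IsEmbedding.subtypeVal.tendsto_nhds_iff]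
    exact hlim
  obtain ⟨b, hb_sub, hb_span, hb_li⟩ := exists_linearIndependent ℝ (Set.range v)
  haveI : Fintype b := hb_li.setFinite.fintype
  have hspan2 : Submodule.span ℝ (Set.range ((↑) : b → (Fin n → ℝ))) = V := by
    rw [Subtype.range_coe]; exact hb_span
  let B0 : Module.Basis b ℝ (Submodule.span ℝ (Set.range ((↑) : b → (Fin n → ℝ)))) :=
    Module.Basis.span hb_li
  let e0 : (Submodule.span ℝ (Set.range ((↑) : b → (Fin n → ℝ)))) ≃ₗ[ℝ] V :=
    LinearEquiv.ofEq _ _ hspan2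
  obtain ⟨B, hBval⟩ : ∃ B : Module.Basis b ℝ V, ∀ j : b, (B j : Fin n → ℝ) = ↑j := by
    refine ⟨B0.map e0, fun j => ?_⟩
    simp only [B0, e0, Module.Basis.map_apply, LinearEquiv.coe_ofEq_apply]
    exact congrArg Subtype.val (Module.Basis.span_apply hb_li j)
  have hidx : ∀ j : b, ∃ i : ℕ, v i = ↑j := fun j => hb_sub j.2
  choose idx hidx_eq using hidx
  have hBu : ∀ j : b, B j = u (idx j) := by
    intro j; apply Subtype.ext; rw [hBval j, hu_def]; exact (hidx_eq j).symm
  set N : V → ℝ := fun w => ∑ j : b, |B.repr w j| with hN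
  have hN_nonneg : ∀ w, 0 ≤ N w := fun w => Finset.sum_nonneg fun j _ => abs_nonneg _
  -- coordinates tend to zero
  have htendj : ∀ j : b, Tendsto (fun k => B.repr (u k) j) atTop (𝓝 0) := by
    intro j
    let cj : V →ₗ[ℝ] ℝ := (Finsupp.lapply j).comp (B.repr : V →ₗ[ℝ] (b →₀ ℝ))
    have hc : Continuous cj := cj.continuous_of_finiteDimensional
    have := (hc.tendsto 0).comp hu0
    simpa [cj, Function.comp_def] using this
  have hNtend : Tendsto (fun k => N (u k)) atTop (𝓝 0) := by
    have : Tendsto (fun k => ∑ j : b, |B.repr (u k) j|) atTop (𝓝 (∑ j : b, (0:ℝ))) :=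
      tendsto_finset_sum _ fun j _ => by simpa using (htendj j).abs
    simpa using this
  -- choose K
  have hev : ∀ j : b, ∀ᶠ K : ℕ in atTop, N (u (idx j + K)) ≤ 1 / 2 := by
    intro j
    have hshift : Tendsto (fun K : ℕ => idx j + K) atTop atTop :=
      tendsto_atTop_mono (fun K => Nat.le_add_left K (idx j)) tendsto_id
    have : Tendsto (fun K : ℕ => N (u (idx j + K))) atTop (𝓝 0) := hNtend.comp hshift
    exact (this.eventually (ge_mem_nhds (by norm_num : (0:ℝ) < 1 / 2))).mono fun K hK => hK
  have hall : ∀ᶠ K : ℕ in atTop, (∀ j : b, N (u (idx j + K)) ≤ 1 / 2) ∧ 1 ≤ K :=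
    (eventually_all.2 hev).and (eventually_ge_atTop 1)
  obtain ⟨K, hKsmall, hK1⟩ := hall.exists
  have hKpos : 0 < K := hK1
  -- contraction
  have hcontr : ∀ w : V, N ((L' ^ K) w) ≤ 1 / 2 * N w := by
    intro w
    have hw : w = ∑ j : b, B.repr w j • B j := (B.sum_repr w).symm
    have hLw : (L' ^ K) w = ∑ j : b, B.repr w j • u (idx j + K) := by
      conv_lhs => rw [hw]
      rw [map_sum]
      refine Finset.sum_congr rfl fun j _ => ?_
      rw [map_smul, hBu j, hpow]
    have hcoord : ∀ j' : b, |B.repr ((L' ^ K) w) j'| ≤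
        ∑ j : b, |B.repr w j| * |B.repr (u (idx j + K)) j'| := by
      intro j'
      rw [hLw, map_sum, Finset.sum_apply']
      refine (Finset.abs_sum_le_sum_abs _ _).trans ?_
      refine Finset.sum_le_sum fun j _ => ?_
      rw [map_smul, Finsupp.smul_apply, smul_eq_mul, abs_mul]
    calc N ((L' ^ K) w) = ∑ j' : b, |B.repr ((L' ^ K) w) j'| := rfl
      _ ≤ ∑ j' : b, ∑ j : b, |B.repr w j| * |B.repr (u (idx j + K)) j'| :=
          Finset.sum_le_sum fun j' _ => hcoord j'
      _ = ∑ j : b, |B.repr w j| * N (u (idx j + K)) := by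
          rw [Finset.sum_comm]
          refine Finset.sum_congr rfl fun j _ => ?_
          rw [hN, Finset.mul_sum]
      _ ≤ ∑ j : b, |B.repr w j| * (1 / 2) :=
          Finset.sum_le_sum fun j _ =>
            mul_le_mul_of_nonneg_left (hKsmall j) (abs_nonneg _)
      _ = 1 / 2 * N w := by rw [hN, ← Finset.sum_mul]; ring
  -- iterate
  have hiter : ∀ q r : ℕ, N (u (q * K + r)) ≤ (1 / 2) ^ q * N (u r) := by
    intro q
    induction q with
    | zero => intro r; simp
    | succ q ih =>
      intro r
      have hidx2 : (q + 1) * K + r = (q * K + r) + K := by ring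
      have : u ((q + 1) * K + r) = (L' ^ K) (u (q * K + r)) := by
        rw [hpow K (q * K + r), hidx2]
      rw [this]
      calc N ((L' ^ K) (u (q * K + r))) ≤ 1 / 2 * N (u (q * K + r)) := hcontr _
        _ ≤ 1 / 2 * ((1 / 2) ^ q * N (u r)) := by
            have := ih r
            nlinarith [hN_nonneg (u (q * K + r))]
        _ = (1 / 2) ^ (q + 1) * N (u r) := by ring
  set B0 : ℝ := (∑ r ∈ Finset.range K, N (u r)) + 1 with hB0
  have hB0_pos : 0 < B0 := by
    have : 0 ≤ ∑ r ∈ Finset.range K, N (u r) :=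
      Finset.sum_nonneg fun r _ => hN_nonneg _
    linarith
  have hB0_bound : ∀ r < K, N (u r) ≤ B0 := by
    intro r hr
    have h1 : N (u r) ≤ ∑ r ∈ Finset.range K, N (u r) :=
      Finset.single_le_sum (fun i _ => hN_nonneg (u i)) (Finset.mem_range.2 hr)
    linarith
  set ρ : ℝ := (1 / 2 : ℝ) ^ ((K : ℝ)⁻¹) with hρdef
  have hρ_mem : ρ ∈ Set.Ico (0 : ℝ) 1 := by
    constructor
    · exact Real.rpow_nonneg (by norm_num) _
    · exact Real.rpow_lt_one (by norm_num) (by norm_num)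
        (inv_pos.2 (by exact_mod_cast hKpos))
  have hρ_pow : ∀ k : ℕ, ((1 / 2 : ℝ)) ^ (k / K) ≤ 2 * ρ ^ k := by
    intro k
    have hKR : (0 : ℝ) < (K : ℝ) := by exact_mod_cast hKpos
    have h1 : ρ ^ k = (1 / 2 : ℝ) ^ ((K : ℝ)⁻¹ * k) := by
      rw [hρdef, ← Real.rpow_natCast ((1 / 2 : ℝ) ^ ((K : ℝ)⁻¹)) k,
        ← Real.rpow_mul (by norm_num)]
    have h2 : ((1 / 2 : ℝ)) ^ (k / K) = (1 / 2 : ℝ) ^ ((k / K : ℕ) : ℝ) := by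
      rw [Real.rpow_natCast]
    have h3 : (K : ℝ)⁻¹ * k - 1 ≤ ((k / K : ℕ) : ℝ) := by
      have hmod : k / K * K + k % K = k := Nat.div_add_mod' k K
      have hlt : k % K < K := Nat.mod_lt _ hKpos
      have : (k : ℝ) < ((k / K : ℕ) : ℝ) * K + K := by
        have : (k : ℝ) = ((k / K : ℕ) : ℝ) * K + (k % K : ℕ) := by exact_mod_cast hmod.symm
        rw [this]
        have : ((k % K : ℕ) : ℝ) < (K : ℝ) := by exact_mod_cast hlt
        linarith
      have hKinv : (K : ℝ) * (K : ℝ)⁻¹ = 1 := mul_inv_cancel₀ hKR.ne'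
      nlinarith [this]
    calc ((1 / 2 : ℝ)) ^ (k / K) = (1 / 2 : ℝ) ^ (((k / K : ℕ) : ℝ)) := h2
      _ ≤ (1 / 2 : ℝ) ^ ((K : ℝ)⁻¹ * k - 1) :=
          Real.rpow_le_rpow_of_exponent_ge (by norm_num) (by norm_num) h3
      _ = 2 * (1 / 2 : ℝ) ^ ((K : ℝ)⁻¹ * k) := by
          rw [Real.rpow_sub (by norm_num), Real.rpow_one]; ring
      _ = 2 * ρ ^ k := by rw [h1]
  -- bound the functional in terms of the coordinates
  set Cphi : ℝ := (∑ j : b, |φ ↑(B j)|) + 1 with hCphi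
  have hCphi_pos : 0 < Cphi := by
    have : 0 ≤ ∑ j : b, |φ ↑(B j)| := Finset.sum_nonneg fun j _ => abs_nonneg _
    linarith
  have hCb : ∀ j : b, |φ ↑(B j)| ≤ Cphi := by
    intro j
    have h1 : |φ ↑(B j)| ≤ ∑ j : b, |φ ↑(B j)| :=
      Finset.single_le_sum (f := fun j : b => |φ ↑(B j)|) (fun i _ => abs_nonneg _)
        (Finset.mem_univ j)
    linarith
  have hphibound : ∀ w : V, |φ ↑w| ≤ Cphi * N w := by
    intro w
    have hw : (w : Fin n → ℝ) = ∑ j : b, B.repr w j • (B j : Fin n → ℝ) := by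
      conv_lhs => rw [← B.sum_repr w]
      push_cast
      rfl
    calc |φ ↑w| = |∑ j : b, B.repr w j * φ ↑(B j)| := by
          rw [hw, map_sum]
          simp [smul_eq_mul]
      _ ≤ ∑ j : b, |B.repr w j * φ ↑(B j)| := Finset.abs_sum_le_sum_abs _ _
      _ ≤ ∑ j : b, |B.repr w j| * Cphi := by
          refine Finset.sum_le_sum fun j _ => ?_
          rw [abs_mul]
          exact mul_le_mul_of_nonneg_left (hCb j) (abs_nonneg _)
      _ = Cphi * N w := by rw [hN, ← Finset.sum_mul]; ring
  have hN_uk : ∀ k : ℕ, N (u k) ≤ 2 * ρ ^ k * B0 := by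
    intro k
    have hdm : (k / K) * K + k % K = k := Nat.div_add_mod' k K
    have h1 : N (u k) ≤ (1 / 2 : ℝ) ^ (k / K) * N (u (k % K)) := by
      have := hiter (k / K) (k % K)
      rwa [hdm] at this
    have h2 : N (u (k % K)) ≤ B0 := hB0_bound _ (Nat.mod_lt _ hKpos)
    have h3 := hρ_pow k
    have hpnn : (0 : ℝ) ≤ (1 / 2 : ℝ) ^ (k / K) := by positivity
    have hρk : (0 : ℝ) ≤ ρ ^ k := pow_nonneg hρ_mem.1 k
    nlinarith [hN_nonneg (u (k % K))]
  refine ⟨2 * Cphi * B0, by positivity, ρ, hρ_mem, fun k => ?_⟩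
  have h1 : |φ (v k)| ≤ Cphi * N (u k) := hphibound (u k)
  have h2 := hN_uk k
  have hρk : (0 : ℝ) ≤ ρ ^ k := pow_nonneg hρ_mem.1 k
  nlinarith [hN_nonneg (u k), hCphi_pos.le]


theorem statement8 {A : Type*} [Fintype A] [Nonempty A]
    (P : List A → ℝ) (hP : IsStochastic P)
    (hrep : ∃ (n : ℕ) (ι τ : Fin n → ℝ) (T : A → Matrix (Fin n) (Fin n) ℝ),
      IsReducedRep ι τ T P) :
    ∃ C > (0 : ℝ), ∃ ρ ∈ Set.Ico (0 : ℝ) 1,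
      ∀ k : ℕ, (∑' w : {w : List A // k ≤ w.length}, P w) ≤ C * ρ ^ k := by
  classical
  obtain ⟨n, ι, τ, T, hPeq, hstoch, -⟩ := hrep
  have hsum_q : ∀ q, Summable (stateSeries τ T q) := fun q => (hstoch q).2.summable
  set v : ℕ → Fin n → ℝ := fun k q => tailSum τ T q k with hv
  set M : Matrix (Fin n) (Fin n) ℝ := ∑ x : A, T x with hM
  have hrec : ∀ k, v (k + 1) = M.mulVecLin (v k) := by
    intro k; funext q
    have h1 : v (k + 1) q = ∑ x : A, ∑ q' : Fin n, T x q q' * tailSum τ T q' k :=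
      tailSum_succ τ T hsum_q q k
    have h2 : M.mulVecLin (v k) q = ∑ q' : Fin n, (∑ x : A, T x q q') * tailSum τ T q' k := by
      simp [hM, Matrix.mulVecLin_apply, Matrix.mulVec, dotProduct, Matrix.sum_apply, hv]
      simp only [Finset.sum_mul]
      exact Finset.sum_comm
    rw [h1, h2, Finset.sum_comm]
    exact Finset.sum_congr rfl fun x _ => by rw [Finset.sum_mul]
  have hlim : Filter.Tendsto v Filter.atTop (nhds 0) := by
    rw [tendsto_pi_nhds]
    intro q
    simpa using tailSum_tendsto τ T q (hstoch q).2
  let φ : (Fin n → ℝ) →ₗ[ℝ] ℝ := ∑ q : Fin n, ι q • LinearMap.proj q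
  have hφ_apply : ∀ x : Fin n → ℝ, φ x = ∑ q : Fin n, ι q * x q := by
    intro x
    simp [φ, smul_eq_mul]
  obtain ⟨C, hC, ρ, hρ, hbound⟩ := geom_decay M.mulVecLin φ v hrec hlim
  refine ⟨C, hC, ρ, hρ, fun k => ?_⟩
  have hPw : ∀ w : List A, P w = ∑ q : Fin n, ι q * stateSeries τ T q w := by
    intro w
    rw [← hPeq]
    simp [maSeries, stateSeries, dotProduct]
  have heq : (∑' w : {w : List A // k ≤ w.length}, P ↑w) = φ (v k) := by
    calc (∑' w : {w : List A // k ≤ w.length}, P ↑w)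
        = ∑' w : {w : List A // k ≤ w.length}, ∑ q : Fin n, ι q * stateSeries τ T q ↑w :=
          tsum_congr fun w => hPw ↑w
      _ = ∑ q : Fin n, ∑' w : {w : List A // k ≤ w.length}, ι q * stateSeries τ T q ↑w :=
          Summable.tsum_finsetSum fun q _ => ((hsum_q q).subtype _).mul_left _
      _ = ∑ q : Fin n, ι q * tailSum τ T q k := by
          refine Finset.sum_congr rfl fun q _ => ?_
          rw [tsum_mul_left]
          rfl
      _ = φ (v k) := (hφ_apply (v k)).symm
  rw [heq]
  exact (le_abs_self _).trans (hbound k)
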